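/- Let C_0 be an [n,t] linear code over F_q and let C be an [n,k] subcode with k ≤ t. Then C is a maximally recoverable subcode of C_0 if and only if every vector c ∈ C^⊥ of Hamming weight at most k is also a codeword of C_0^⊥. -/

import Mathlib

open Matrix

section Defs
variable {F : Type*} [Field F]

/-- Rank of the submatrix of `G` consisting of the columns indexed by `S`. -/
noncomputable def colRank {m α : Type*} [Fintype α] (G : Matrix m α F) (S : Finset α) : ℕ :=
  (G.submatrix id (fun j : S => (j : α))).rank

/-- The row space of a matrix. -/
def rowSpan {m α : Type*} (G : Matrix m α F) : Submodule F (α → F) :=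
  Submodule.span F (Set.range fun i => G i)

/-- Rank of the restriction (puncturing) of a code `C` to the coordinates in `S`. -/
noncomputable def restrRank {α : Type*} (C : Submodule F (α → F)) (S : Finset α) : ℕ :=
  Module.finrank F (C.map (LinearMap.funLeft F F (fun j : S => (j : α))))

/-- Shortening of a code on coordinates `α ⊕ β` to the coordinates `α`. -/
noncomputable def shortenSum {α β : Type*} (D : Submodule F ((α ⊕ β) → F)) :
    Submodule F (α → F) :=
  Submodule.map (LinearMap.funLeft F F Sum.inl)
    (D ⊓ (⨅ j : β, LinearMap.ker
      (LinearMap.proj (R := F) (Sum.inr j) : ((α ⊕ β) → F) →ₗ[F] F)))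

/-- A valid (zero-error, worst case) scheme for the point-to-point function-update problem. -/
def IsValidScheme [DecidableEq F] {n m ℓ : ℕ} (A : Matrix (Fin m) (Fin n) F)
    (H : Matrix (Fin ℓ) (Fin n) F) (ε : ℕ)
    (D : (Fin ℓ → F) → (Fin m → F) → (Fin m → F)) : Prop :=
  ∀ X E : Fin n → F, hammingNorm E ≤ ε →
    D (H.mulVec (X + E)) (A.mulVec X) = A.mulVec (X + E)

end Defs

namespace MRSCAux
variable {F : Type*} [Field F]

def extFn {n : ℕ} (S : Finset (Fin n)) (v : {j // j ∈ S} → F) : Fin n → F :=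
  fun j => if h : j ∈ S then v ⟨j, h⟩ else 0

lemma extFn_eq_self {n : ℕ} (S : Finset (Fin n)) (v : Fin n → F)
    (hv : ∀ j ∉ S, v j = 0) : extFn S (fun j => v j) = v := by
  funext j
  by_cases h : j ∈ S <;> simp [extFn, h, hv j]

lemma mulVec_submatrix {r n : ℕ} (M : Matrix (Fin r) (Fin n) F) (S : Finset (Fin n))
    (v : {j // j ∈ S} → F) :
    (M.submatrix id (fun j : S => (j : Fin n))).mulVec v = M.mulVec (extFn S v) := by
  funext i
  simp only [Matrix.mulVec, dotProduct, Matrix.submatrix_apply, id]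
  have h1 : ∀ x ∈ Finset.univ, x ∉ S → M i x * extFn S v x = 0 := by
    intro x _ hx; simp [extFn, hx]
  rw [← Finset.sum_subset (Finset.subset_univ S) h1,
      ← Finset.sum_attach S (fun j => M i j * extFn S v j), Finset.univ_eq_attach]
  exact Finset.sum_congr rfl (fun x _ => by simp [extFn, x.2])

/-- kernel-triviality of columns on S -/
def KerTriv {r n : ℕ} (M : Matrix (Fin r) (Fin n) F) (S : Finset (Fin n)) : Prop :=
  ∀ v : Fin n → F, (∀ j ∉ S, v j = 0) → M.mulVec v = 0 → v = 0

lemma colRank_eq_card_iff {r n : ℕ} (M : Matrix (Fin r) (Fin n) F) (S : Finset (Fin n)) :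
    colRank M S = S.card ↔ KerTriv M S := by
  set A := M.submatrix id (fun j : S => (j : Fin n)) with hA
  have hcr : colRank M S = A.rank := rfl
  rw [hcr]
  have hrn : A.rank + Module.finrank F (LinearMap.ker A.mulVecLin) = S.card := by
    have := LinearMap.finrank_range_add_finrank_ker A.mulVecLin
    rwa [Module.finrank_fintype_fun_eq_card, Fintype.card_coe] at this
  constructor
  · intro h v hv hMv
    have hker : Module.finrank F (LinearMap.ker A.mulVecLin) = 0 := by omega
    rw [Submodule.finrank_eq_zero, LinearMap.ker_eq_bot'] at hker
    have h0 : A.mulVec (fun j => v j) = 0 := by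
      rw [mulVec_submatrix, extFn_eq_self S v hv, hMv]
    have := hker _ h0
    funext j
    by_cases hj : j ∈ S
    · exact congrFun this ⟨j, hj⟩
    · exact hv j hj
  · intro h
    have hker : LinearMap.ker A.mulVecLin = ⊥ := by
      rw [LinearMap.ker_eq_bot']
      intro w hw
      have h0 : M.mulVec (extFn S w) = 0 := by
        rw [← mulVec_submatrix]; exact hw
      have := h (extFn S w) (fun j hj => by simp [extFn, hj]) h0
      funext j
      have := congrFun this (j : Fin n)
      simpa [extFn, j.2] using this
    rw [hker] at hrn
    simpa [finrank_bot] using hrn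

lemma mulVec_of_rowSpan {t k n : ℕ} (G0 : Matrix (Fin t) (Fin n) F)
    (G : Matrix (Fin k) (Fin n) F) (hsub : ∀ i, G i ∈ rowSpan G0)
    {c : Fin n → F} (h : G0.mulVec c = 0) : G.mulVec c = 0 := by
  funext i
  have key : ∀ w ∈ rowSpan G0, w ⬝ᵥ c = 0 := by
    intro w hw
    induction hw using Submodule.span_induction with
    | mem x hx =>
      obtain ⟨r, rfl⟩ := hx
      exact congrFun h r
    | zero => simp
    | add x y _ _ hx hy => rw [add_dotProduct, hx, hy, add_zero]
    | smul a x _ hx => rw [smul_dotProduct, hx, smul_zero]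
  exact key _ (hsub i)

end MRSCAux
namespace MRSCAux
variable {F : Type*} [Field F]

def colF {t n : ℕ} (G0 : Matrix (Fin t) (Fin n) F) (j : Fin n) : Fin t → F :=
  fun i => G0 i j

lemma mulVec_eq_sum_cols {r n : ℕ} (M : Matrix (Fin r) (Fin n) F) (v : Fin n → F) :
    M.mulVec v = ∑ j, v j • colF M j := by
  funext i
  simp only [Matrix.mulVec, dotProduct, Finset.sum_apply, Pi.smul_apply, smul_eq_mul, colF]
  exact Finset.sum_congr rfl (fun j _ => mul_comm _ _)

lemma exists_extend {t n : ℕ} (G0 : Matrix (Fin t) (Fin n) F) (hG0 : G0.rank = t)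
    (S : Finset (Fin n)) (hS : KerTriv G0 S) (hlt : S.card < t) :
    ∃ j ∉ S, KerTriv G0 (insert j S) := by
  classical
  set W : Submodule F (Fin t → F) := Submodule.span F (colF G0 '' ↑S) with hW
  have hex : ∃ j, colF G0 j ∉ W := by
    by_contra hall
    push_neg at hall
    have hle : Submodule.span F (Set.range G0ᵀ) ≤ W := by
      rw [Submodule.span_le]
      rintro _ ⟨j, rfl⟩
      exact hall j
    have h1 : Module.finrank F W ≤ S.card := by
      have hWf : W = Submodule.span F ((S.image (colF G0) : Finset (Fin t → F)) :
          Set (Fin t → F)) := by rw [hW, Finset.coe_image]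
      rw [hWf]
      exact (finrank_span_finset_le_card _).trans (Finset.card_image_le)
    have heq : t = Module.finrank F (Submodule.span F (Set.range G0ᵀ)) := by
      have := G0.rank_eq_finrank_span_cols
      rwa [hG0] at this
    have h2 : t ≤ Module.finrank F W := heq.trans_le (Submodule.finrank_mono hle)
    omega
  obtain ⟨j, hj⟩ := hex
  have hjS : j ∉ S := fun h => hj (Submodule.subset_span ⟨j, h, rfl⟩)
  refine ⟨j, hjS, ?_⟩
  intro v hv hMv
  rw [mulVec_eq_sum_cols] at hMv
  have hsum : ∑ i ∈ insert j S, v i • colF G0 i = 0 := by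
    rw [Finset.sum_subset (Finset.subset_univ _)
      (fun x _ hx => by rw [hv x hx, zero_smul])]
    exact hMv
  rw [Finset.sum_insert hjS] at hsum
  by_cases hvj : v j = 0
  · apply hS v
    · intro i hi
      by_cases hij : i = j
      · exact hij ▸ hvj
      · exact hv i (by simp [hij, hi])
    · rw [mulVec_eq_sum_cols]
      rw [hvj, zero_smul, zero_add] at hsum
      rw [← Finset.sum_subset (Finset.subset_univ S) ?_]
      · exact hsum
      · intro x _ hx
        by_cases hxj : x = j
        · rw [hxj, hvj, zero_smul]
        · rw [hv x (by simp [hxj, hx]), zero_smul]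
  · exfalso
    apply hj
    have h4 : v j • colF G0 j = -∑ i ∈ S, v i • colF G0 i := by
      rw [eq_neg_iff_add_eq_zero]; exact hsum
    have h3 : colF G0 j = (-(v j)⁻¹) • ∑ i ∈ S, v i • colF G0 i := by
      calc colF G0 j = (v j)⁻¹ • (v j • colF G0 j) := (inv_smul_smul₀ hvj _).symm
        _ = (v j)⁻¹ • (-∑ i ∈ S, v i • colF G0 i) := by rw [h4]
        _ = (-(v j)⁻¹) • ∑ i ∈ S, v i • colF G0 i := by rw [smul_neg, neg_smul]
    rw [h3]
    exact Submodule.smul_mem _ _ (Submodule.sum_mem _ fun i hi =>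
      Submodule.smul_mem _ _ (Submodule.subset_span ⟨i, hi, rfl⟩))

lemma extend_to_card {t n : ℕ} (G0 : Matrix (Fin t) (Fin n) F) (hG0 : G0.rank = t)
    {k : ℕ} (hk : k ≤ t) :
    ∀ m (S : Finset (Fin n)), k - S.card = m → KerTriv G0 S → S.card ≤ k →
      ∃ S', S ⊆ S' ∧ S'.card = k ∧ KerTriv G0 S' := by
  intro m
  induction m with
  | zero =>
    intro S hm hS hcard
    exact ⟨S, Finset.Subset.refl S, by omega, hS⟩
  | succ m ih =>
    intro S hm hS hcard
    have hlt : S.card < t := by omega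
    obtain ⟨j, hjS, hins⟩ := exists_extend G0 hG0 S hS hlt
    have hc : (insert j S).card = S.card + 1 := Finset.card_insert_of_notMem hjS
    obtain ⟨S', h1, h2, h3⟩ := ih (insert j S) (by omega) hins (by omega)
    exact ⟨S', (Finset.subset_insert j S).trans h1, h2, h3⟩

end MRSCAux
namespace MRSCAux
variable {F : Type*} [Field F] [DecidableEq F]

lemma reduce_support {t k n : ℕ} (G0 : Matrix (Fin t) (Fin n) F)
    (G : Matrix (Fin k) (Fin n) F) (hsub : ∀ i, G i ∈ rowSpan G0) :
    ∀ m (c : Fin n → F), (Finset.univ.filter fun j => c j ≠ 0).card ≤ m →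
      G.mulVec c = 0 → G0.mulVec c ≠ 0 →
      ∃ c' : Fin n → F, (∀ j, c' j ≠ 0 → c j ≠ 0) ∧ G.mulVec c' = 0 ∧ G0.mulVec c' ≠ 0 ∧
        KerTriv G0 (Finset.univ.filter fun j => c' j ≠ 0) := by
  intro m
  induction m with
  | zero =>
    intro c hc hGc hG0c
    exfalso
    apply hG0c
    have hc0 : c = 0 := by
      funext j
      show c j = 0
      by_contra hj
      have hmem : j ∈ Finset.univ.filter (fun j => c j ≠ 0) := by simp [hj]
      have := Finset.card_pos.mpr ⟨j, hmem⟩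
      omega
    rw [hc0, Matrix.mulVec_zero]
  | succ m ih =>
    intro c hc hGc hG0c
    by_cases hK : KerTriv G0 (Finset.univ.filter fun j => c j ≠ 0)
    · exact ⟨c, fun _ h => h, hGc, hG0c, hK⟩
    · unfold KerTriv at hK
      push_neg at hK
      obtain ⟨d, hd1, hd2, hd3⟩ := hK
      obtain ⟨j, hj⟩ : ∃ j, d j ≠ 0 := by
        by_contra h; push_neg at h; exact hd3 (funext h)
      have hcj : c j ≠ 0 := by
        by_contra h
        exact hj (hd1 j (by simp [h]))
      set c2 : Fin n → F := c - (c j / d j) • d with hc2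
      have hGc2 : G.mulVec c2 = 0 := by
        have hGd : G.mulVec d = 0 := mulVec_of_rowSpan G0 G hsub hd2
        rw [hc2, Matrix.mulVec_sub, Matrix.mulVec_smul, hGc, hGd, smul_zero, sub_zero]
      have hG0c2 : G0.mulVec c2 = G0.mulVec c := by
        rw [hc2, Matrix.mulVec_sub, Matrix.mulVec_smul, hd2, smul_zero, sub_zero]
      have hsupp : ∀ i, c2 i ≠ 0 → (c i ≠ 0 ∧ i ≠ j) := by
        intro i hi
        constructor
        · by_contra hcc
          have h : c i = 0 := by tauto
          have hdi : d i = 0 := hd1 i (by simp [h])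
          apply hi
          simp [hc2, h, hdi]
        · intro hij
          apply hi
          subst hij
          simp only [hc2, Pi.sub_apply, Pi.smul_apply, smul_eq_mul]
          field_simp
          simp
      have hjmem : j ∈ Finset.univ.filter (fun i => c i ≠ 0) := by simp [hcj]
      have hsub2 : (Finset.univ.filter fun i => c2 i ≠ 0) ⊆
          (Finset.univ.filter fun i => c i ≠ 0).erase j := by
        intro i hi
        simp only [Finset.mem_filter, Finset.mem_univ, true_and] at hi
        obtain ⟨h1, h2⟩ := hsupp i hi
        simp [Finset.mem_erase, h1, h2]
      have hcard : (Finset.univ.filter fun i => c2 i ≠ 0).card ≤ m := by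
        have h5 := Finset.card_le_card hsub2
        rw [Finset.card_erase_of_mem hjmem] at h5
        omega
      obtain ⟨c', h1, h2, h3, h4⟩ := ih c2 hcard hGc2 (by rw [hG0c2]; exact hG0c)
      exact ⟨c', fun i h => (hsupp i (h1 i h)).1, h2, h3, h4⟩

end MRSCAux

/-- `C` is an MRSC of `C₀` iff every dual codeword of `C` of Hamming
weight at most `k` is a dual codeword of `C₀`. -/
theorem mrsc_iff_sparse_dual {F : Type*} [Field F] [Fintype F] [DecidableEq F]
    {n t k : ℕ} (hkt : k ≤ t)
    (G0 : Matrix (Fin t) (Fin n) F) (G : Matrix (Fin k) (Fin n) F)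
    (hG0 : G0.rank = t) (hG : G.rank = k)
    (hsub : ∀ i, G i ∈ rowSpan G0) :
    (∀ S : Finset (Fin n), S.card = k → colRank G0 S = k → colRank G S = k) ↔
      (∀ c : Fin n → F, G.mulVec c = 0 → hammingNorm c ≤ k → G0.mulVec c = 0) := by
  classical
  constructor
  · intro hM c hGc hw
    by_contra hG0c
    have hwc : (Finset.univ.filter fun j => c j ≠ 0).card ≤ k := by
      simpa [hammingNorm] using hw
    obtain ⟨c', h1, h2, h3, h4⟩ := MRSCAux.reduce_support G0 G hsub
        ((Finset.univ.filter fun j => c j ≠ 0).card) c le_rfl hGc hG0c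
    set T := Finset.univ.filter fun j => c' j ≠ 0 with hT
    have hTs : T ⊆ Finset.univ.filter fun j => c j ≠ 0 := by
      intro i hi
      simp only [hT, Finset.mem_filter, Finset.mem_univ, true_and] at hi ⊢
      exact h1 i hi
    have hTcard : T.card ≤ k := le_trans (Finset.card_le_card hTs) hwc
    obtain ⟨S, hTS, hScard, hSK⟩ :=
      MRSCAux.extend_to_card G0 hG0 hkt (k - T.card) T rfl h4 hTcard
    have hcr0 : colRank G0 S = k := by
      rw [← hScard]
      exact (MRSCAux.colRank_eq_card_iff G0 S).mpr hSK
    have hcrG := hM S hScard hcr0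
    have hKG : MRSCAux.KerTriv G S := by
      rw [← MRSCAux.colRank_eq_card_iff]
      rw [hScard]; exact hcrG
    have hc'0 : c' = 0 := by
      apply hKG c' _ h2
      intro i hiS
      by_contra hci
      exact hiS (hTS (by simp [hT, hci]))
    apply h3
    rw [hc'0, Matrix.mulVec_zero]
  · intro hd S hScard hS0
    have hker : MRSCAux.KerTriv G S := by
      intro v hv hGv
      have hw : hammingNorm v ≤ k := by
        have hfs : (Finset.univ.filter fun j => v j ≠ 0) ⊆ S := by
          intro i hi
          simp only [Finset.mem_filter, Finset.mem_univ, true_and] at hi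
          by_contra hiS
          exact hi (hv i hiS)
        calc hammingNorm v = (Finset.univ.filter fun j => v j ≠ 0).card := by
              simp [hammingNorm]
          _ ≤ S.card := Finset.card_le_card hfs
          _ = k := hScard
      have h0 : G0.mulVec v = 0 := hd v hGv hw
      exact (MRSCAux.colRank_eq_card_iff G0 S).mp (by rw [hScard]; exact hS0) v hv h0
    exact ((MRSCAux.colRank_eq_card_iff G S).mpr hker).trans hScard
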